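/- Let ω ∈ 𝕋 and let x = (a b; c d) ∈ D_ω. Write x_𝔰 = (0 b; c 0) for the block-antidiagonal part of x, and let τ be the p×q matrix with τ_{i,j} = 1 if j ∈ J and i = σ(j), and τ_{i,j} = 0 otherwise. Then for every m ≥ 0, the lower-left q×p block of (x_𝔰)^{2m+1} equals (−1)^m (c τ)^{2m} c. -/

import Mathlib

open scoped Classical
open Matrix

noncomputable section

/-- A partial permutation matrix: entries in `{0,1}`, at most one `1` in each row
and in each column. -/
def IsPartialPerm {m n : ℕ} (τ : Matrix (Fin m) (Fin n) ℂ) : Prop :=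
  (∀ i j, τ i j = 0 ∨ τ i j = 1) ∧
  (∀ i j j', τ i j = 1 → τ i j' = 1 → j = j') ∧
  (∀ i i' j, τ i j = 1 → τ i' j = 1 → i = i')

/-- `(p+q) × r` complex matrices, rows indexed by `Fin p ⊕ Fin q`. -/
abbrev MatT (p q r : ℕ) := Matrix (Fin p ⊕ Fin q) (Fin r) ℂ

/-- The set `𝕋`: `(p+q) × r` matrices of rank `r` whose top `p × r` and bottom
`q × r` blocks are partial permutation matrices. -/
def InT {p q r : ℕ} (ω : MatT p q r) : Prop :=
  ω.rank = r ∧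
  IsPartialPerm (Matrix.of fun (i : Fin p) (c : Fin r) => ω (Sum.inl i) c) ∧
  IsPartialPerm (Matrix.of fun (j : Fin q) (c : Fin r) => ω (Sum.inr j) c)

/-- The permutation matrix of `w`: `(P_w)_{i,j} = 1` iff `i = w j`. -/
def permMat {r : ℕ} (w : Equiv.Perm (Fin r)) : Matrix (Fin r) (Fin r) ℂ :=
  Matrix.of fun i j => if i = w j then 1 else 0

/-- `[ω]`, the column space of `ω`, as a subspace of `ℂ^{p+q}`. -/
def colSpace {p q r : ℕ} (ω : MatT p q r) : Submodule ℂ (Fin p ⊕ Fin q → ℂ) :=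
  LinearMap.range ω.mulVecLin

/-- `i ∈ I`: some column of `ω` has a `1` in row `i` (top block) and a `1` in some
bottom row. -/
def memI {p q r : ℕ} (ω : MatT p q r) (i : Fin p) : Prop :=
  ∃ c, ω (Sum.inl i) c = 1 ∧ ∃ j : Fin q, ω (Sum.inr j) c = 1

/-- `i ∈ L`: some column of `ω` has a `1` in row `i` (top block) and no other
nonzero entry. -/
def memL {p q r : ℕ} (ω : MatT p q r) (i : Fin p) : Prop :=
  ∃ c, ω (Sum.inl i) c = 1 ∧ ∀ k, k ≠ Sum.inl i → ω k c = 0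

/-- `i ∈ L'`: row `i` of the top block is zero. -/
def memL' {p q r : ℕ} (ω : MatT p q r) (i : Fin p) : Prop :=
  ∀ c, ω (Sum.inl i) c = 0

/-- `j ∈ J`: some column of `ω` has a `1` in row `p+j` and a `1` in some top row. -/
def memJ {p q r : ℕ} (ω : MatT p q r) (j : Fin q) : Prop :=
  ∃ c, ω (Sum.inr j) c = 1 ∧ ∃ i : Fin p, ω (Sum.inl i) c = 1

/-- `j ∈ M`: some column of `ω` has a `1` in row `p+j` and no other nonzero entry. -/
def memM {p q r : ℕ} (ω : MatT p q r) (j : Fin q) : Prop :=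
  ∃ c, ω (Sum.inr j) c = 1 ∧ ∀ k, k ≠ Sum.inr j → ω k c = 0

/-- `j ∈ M'`: row `p+j` of `ω` (i.e. row `j` of the bottom block) is zero. -/
def memM' {p q r : ℕ} (ω : MatT p q r) (j : Fin q) : Prop :=
  ∀ c, ω (Sum.inr j) c = 0

/-- The conormal direction `D_ω`: block matrices `(a b; c d)` with `a, d` strictly
upper triangular, column space contained in `[ω]`, and `[ω]` contained in the
kernel. -/
def Dset {p q r : ℕ} (ω : MatT p q r) :
    Set (Matrix (Fin p ⊕ Fin q) (Fin p ⊕ Fin q) ℂ) :=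
  {x | (∀ i j : Fin p, j ≤ i → x (Sum.inl i) (Sum.inl j) = 0) ∧
       (∀ i j : Fin q, j ≤ i → x (Sum.inr i) (Sum.inr j) = 0) ∧
       LinearMap.range x.mulVecLin ≤ colSpace ω ∧
       colSpace ω ≤ LinearMap.ker x.mulVecLin}

/-- The `p × q` matrix `τ` with `τ_{i,j} = 1` iff `j ∈ J` and `i = σ(j)`. -/
def tauMat {p q r : ℕ} (ω : MatT p q r) (σ : Fin q → Fin p) :
    Matrix (Fin p) (Fin q) ℂ :=
  Matrix.of fun i j => if memJ ω j ∧ i = σ j then 1 else 0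

section Aux

variable {p q r : ℕ}

lemma mul_tau_apply (ω : MatT p q r) (σ : Fin q → Fin p)
    (c : Matrix (Fin q) (Fin p) ℂ) (k : Fin q) (j : Fin q) :
    (c * tauMat ω σ) k j = if memJ ω j then c k (σ j) else 0 := by
  rw [Matrix.mul_apply]
  by_cases h : memJ ω j
  · simp only [tauMat, Matrix.of_apply, h, true_and, mul_ite, mul_one, mul_zero]
    simp [Finset.sum_ite_eq']
  · simp [tauMat, h]

/-- The key columnwise identity. -/
lemma col_key (ω : MatT p q r) (hω : InT ω) (σ : Fin q → Fin p)
    (hσ : ∀ j, memJ ω j → ∃ c, ω (Sum.inl (σ j)) c = 1 ∧ ω (Sum.inr j) c = 1)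
    (a : Matrix (Fin p) (Fin p) ℂ) (b : Matrix (Fin p) (Fin q) ℂ)
    (c : Matrix (Fin q) (Fin p) ℂ) (d : Matrix (Fin q) (Fin q) ℂ)
    (hker : colSpace ω ≤ LinearMap.ker (Matrix.fromBlocks a b c d).mulVecLin)
    (t : Fin r) (k : Fin q) :
    ∑ i, c k i * ω (Sum.inl i) t = ∑ j, (c * tauMat ω σ) k j * ω (Sum.inr j) t := by
  have h01top : ∀ i t, ω (Sum.inl i) t = 0 ∨ ω (Sum.inl i) t = 1 := hω.2.1.1
  have h01bot : ∀ j t, ω (Sum.inr j) t = 0 ∨ ω (Sum.inr j) t = 1 := hω.2.2.1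
  have hcoltop : ∀ i i' t, ω (Sum.inl i) t = 1 → ω (Sum.inl i') t = 1 → i = i' :=
    fun i i' t h h' => hω.2.1.2.2 i i' t h h'
  have hrowbot : ∀ j t t', ω (Sum.inr j) t = 1 → ω (Sum.inr j) t' = 1 → t = t' :=
    fun j t t' h h' => hω.2.2.2.1 j t t' h h'
  have hcolbot : ∀ j j' t, ω (Sum.inr j) t = 1 → ω (Sum.inr j') t = 1 → j = j' :=
    fun j j' t h h' => hω.2.2.2.2 j j' t h h'
  by_cases htop : ∃ i, ω (Sum.inl i) t = 1
  · obtain ⟨i₀, hi₀⟩ := htop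
    have htopval : ∀ i, ω (Sum.inl i) t = if i = i₀ then 1 else 0 := by
      intro i
      by_cases h : i = i₀
      · subst h; simp [hi₀]
      · rcases h01top i t with h0 | h1
        · simp [h, h0]
        · exact absurd (hcoltop i i₀ t h1 hi₀) h
    have hLHS : ∑ i, c k i * ω (Sum.inl i) t = c k i₀ := by
      simp [htopval, mul_ite, Finset.sum_ite_eq']
    by_cases hbot : ∃ j, ω (Sum.inr j) t = 1
    · obtain ⟨j₀, hj₀⟩ := hbot
      have hbotval : ∀ j, ω (Sum.inr j) t = if j = j₀ then 1 else 0 := by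
        intro j
        by_cases h : j = j₀
        · subst h; simp [hj₀]
        · rcases h01bot j t with h0 | h1
          · simp [h, h0]
          · exact absurd (hcolbot j j₀ t h1 hj₀) h
      have hJ : memJ ω j₀ := ⟨t, hj₀, i₀, hi₀⟩
      have hσj₀ : σ j₀ = i₀ := by
        obtain ⟨t', h1, h2⟩ := hσ j₀ hJ
        have ht' : t' = t := hrowbot j₀ t' t h2 hj₀
        subst ht'
        exact hcoltop (σ j₀) i₀ t' h1 hi₀
      rw [hLHS]
      have : ∑ j, (c * tauMat ω σ) k j * ω (Sum.inr j) t = (c * tauMat ω σ) k j₀ := by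
        simp [hbotval, mul_ite, Finset.sum_ite_eq']
      rw [this, mul_tau_apply, if_pos hJ, hσj₀]
    · have hbotval : ∀ j, ω (Sum.inr j) t = 0 := by
        intro j
        rcases h01bot j t with h0 | h1
        · exact h0
        · exact absurd ⟨j, h1⟩ hbot
      have hu : ω.mulVec (Pi.single t 1) ∈ colSpace ω := ⟨Pi.single t 1, rfl⟩
      have h0 := hker hu
      rw [LinearMap.mem_ker] at h0
      have h0k := congrFun h0 (Sum.inr k)
      simp only [Matrix.mulVecLin_apply, Matrix.mulVec_single_one, mul_one,
        Matrix.mulVec, dotProduct, Pi.zero_apply] at h0k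
      rw [Fintype.sum_sum_type] at h0k
      simp only [Matrix.fromBlocks_apply₂₁, Matrix.fromBlocks_apply₂₂, Matrix.col_apply] at h0k
      have hz : ∑ i, c k i * ω (Sum.inl i) t = 0 := by
        have h2 : ∑ j, d k j * ω (Sum.inr j) t = 0 := by simp [hbotval]
        rw [h2, add_zero] at h0k
        exact h0k
      rw [hz]
      symm
      exact Finset.sum_eq_zero fun j _ => by simp [hbotval]
  · have htopval : ∀ i, ω (Sum.inl i) t = 0 := by
      intro i
      rcases h01top i t with h0 | h1
      · exact h0
      · exact absurd ⟨i, h1⟩ htop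
    rw [Finset.sum_eq_zero (fun i _ => by simp [htopval])]
    symm
    apply Finset.sum_eq_zero
    intro j _
    rcases h01bot j t with h0 | h1
    · simp [h0]
    · have hnJ : ¬ memJ ω j := by
        rintro ⟨t', hb, i, ht⟩
        have htt : t' = t := hrowbot j t' t hb h1
        subst htt
        exact absurd ⟨i, ht⟩ htop
      rw [mul_tau_apply, if_neg hnJ, zero_mul]

end Aux

theorem odd_powers_lower_left_block (p q r : ℕ) (hr : r ≤ p + q)
    (ω : MatT p q r) (hω : InT ω) (σ : Fin q → Fin p)
    (hσ : ∀ j, memJ ω j → ∃ c, ω (Sum.inl (σ j)) c = 1 ∧ ω (Sum.inr j) c = 1)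
    (a : Matrix (Fin p) (Fin p) ℂ) (b : Matrix (Fin p) (Fin q) ℂ)
    (c : Matrix (Fin q) (Fin p) ℂ) (d : Matrix (Fin q) (Fin q) ℂ)
    (hx : Matrix.fromBlocks a b c d ∈ Dset ω) :
    ∀ m : ℕ,
      ((Matrix.fromBlocks 0 b c 0) ^ (2 * m + 1)).toBlocks₂₁ =
        ((-1 : ℂ) ^ m) • ((c * tauMat ω σ) ^ (2 * m) * c) := by
  obtain ⟨-, -, hrange, hker⟩ := hx
  set τ : Matrix (Fin p) (Fin q) ℂ := tauMat ω σ with hτdef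
  -- M1: for u in the column space, c · (top of u) = (cτ) · (bottom of u)
  have hM1 : ∀ u ∈ colSpace ω,
      c.mulVec (fun i => u (Sum.inl i)) = (c * τ).mulVec (fun j => u (Sum.inr j)) := by
    rintro u ⟨v, rfl⟩
    funext k
    simp only [Matrix.mulVecLin_apply, Matrix.mulVec, dotProduct]
    calc ∑ i, c k i * ∑ t, ω (Sum.inl i) t * v t
        = ∑ t, (∑ i, c k i * ω (Sum.inl i) t) * v t := by
          simp_rw [Finset.mul_sum, Finset.sum_mul, ← mul_assoc]
          rw [Finset.sum_comm]
      _ = ∑ t, (∑ j, (c * τ) k j * ω (Sum.inr j) t) * v t := by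
          refine Finset.sum_congr rfl fun t _ => ?_
          rw [col_key ω hω σ hσ a b c d hker t k]
      _ = ∑ j, (c * τ) k j * ∑ t, ω (Sum.inr j) t * v t := by
          simp_rw [Finset.mul_sum, Finset.sum_mul, ← mul_assoc]
          rw [Finset.sum_comm]
  -- M2: from the kernel condition
  have hM2 : ∀ u ∈ colSpace ω,
      d.mulVec (fun j => u (Sum.inr j)) = -((c * τ).mulVec (fun j => u (Sum.inr j))) := by
    intro u hu
    have h0 := hker hu
    rw [LinearMap.mem_ker] at h0
    funext k
    have h0k := congrFun h0 (Sum.inr k)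
    simp only [Matrix.mulVecLin_apply, Matrix.mulVec, dotProduct,
      Pi.zero_apply] at h0k
    rw [Fintype.sum_sum_type] at h0k
    simp only [Matrix.fromBlocks_apply₂₁, Matrix.fromBlocks_apply₂₂] at h0k
    have hM1k := congrFun (hM1 u hu) k
    simp only [Matrix.mulVec, dotProduct] at hM1k
    simp only [Matrix.mulVec, dotProduct, Pi.neg_apply]
    rw [← hM1k]
    linear_combination h0k
  -- columns of x lie in the column space
  have hcolmem : ∀ l, (fun k => (Matrix.fromBlocks a b c d) k l) ∈ colSpace ω := by
    intro l
    apply hrange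
    exact ⟨Pi.single l 1, by funext k; simp [Matrix.mulVecLin_apply, Matrix.mulVec_single]⟩
  -- L1 : d * c = -((c*τ) * c)
  have hL1 : d * c = -((c * τ) * c) := by
    ext k i
    have h := congrFun (hM2 _ (hcolmem (Sum.inl i))) k
    simp only [Matrix.fromBlocks_apply₂₁, Matrix.mulVec, dotProduct,
      Pi.neg_apply] at h
    simpa [Matrix.mul_apply] using h
  -- L2 : c * b = (c*τ) * d
  have hL2 : c * b = (c * τ) * d := by
    ext k j
    have h := congrFun (hM1 _ (hcolmem (Sum.inr j))) k
    simp only [Matrix.fromBlocks_apply₁₂, Matrix.fromBlocks_apply₂₂, Matrix.mulVec,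
      dotProduct] at h
    simpa [Matrix.mul_apply] using h
  -- commutation: (cτ)^k * c = c * (τ*c)^k
  have hcomm : ∀ k : ℕ, (c * τ) ^ k * c = c * (τ * c) ^ k := by
    intro k
    induction k with
    | zero => simp
    | succ n ih =>
        rw [pow_succ, pow_succ, Matrix.mul_assoc, Matrix.mul_assoc c τ c, ← Matrix.mul_assoc ((c * τ) ^ n) c (τ * c),
          ih, Matrix.mul_assoc]
  -- d * ((cτ)^k * c) = -((cτ)^{k+1} * c)
  have hd : ∀ k : ℕ, d * ((c * τ) ^ k * c) = -((c * τ) ^ (k + 1) * c) := by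
    intro k
    rw [hcomm k, ← Matrix.mul_assoc, hL1, Matrix.neg_mul, Matrix.mul_assoc, ← hcomm k, ← Matrix.mul_assoc, ← pow_succ']
  -- cb * ((cτ)^k * c) = -((cτ)^{k+2} * c)
  have hcb : ∀ k : ℕ, (c * b) * ((c * τ) ^ k * c) = -((c * τ) ^ (k + 2) * c) := by
    intro k
    rw [hL2, Matrix.mul_assoc, hd k, Matrix.mul_neg, ← Matrix.mul_assoc, ← pow_succ']
  -- main algebraic induction
  have hmain : ∀ m : ℕ, (c * b) ^ m * c = ((-1 : ℂ) ^ m) • ((c * τ) ^ (2 * m) * c) := by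
    intro m
    induction m with
    | zero => simp
    | succ n ih =>
        have h1 : (c * b) ^ (n + 1) * c = (c * b) * ((c * b) ^ n * c) := by
          rw [pow_succ', Matrix.mul_assoc]
        rw [h1, ih, Matrix.mul_smul, hcb (2 * n)]
        rw [show 2 * n + 2 = 2 * (n + 1) from by ring, smul_neg, ← neg_smul, pow_succ]
        congr 1
        ring
  -- block power computation
  have hpow : ∀ m : ℕ, (Matrix.fromBlocks 0 b c 0 :
        Matrix (Fin p ⊕ Fin q) (Fin p ⊕ Fin q) ℂ) ^ (2 * m + 1) =
      Matrix.fromBlocks 0 ((b * c) ^ m * b) ((c * b) ^ m * c) 0 := by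
    intro m
    induction m with
    | zero => simp
    | succ n ih =>
        have harith : 2 * (n + 1) + 1 = (2 * n + 1) + 2 := by ring
        rw [harith, pow_add, ih, sq, ← Matrix.mul_assoc]
        rw [Matrix.fromBlocks_multiply, Matrix.fromBlocks_multiply]
        simp only [Matrix.mul_zero, Matrix.zero_mul, add_zero, zero_add]
        rw [Matrix.fromBlocks_inj]
        refine ⟨rfl, ?_, ?_, rfl⟩ <;> simp only [pow_succ, Matrix.mul_assoc]
  intro m
  rw [hpow m, Matrix.toBlocks_fromBlocks₂₁, hmain m]
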